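/- Let f : N → ℝ be defined on an open set N ⊆ ℝⁿ by f(x) = ⟨x − π(x), η(π(x))⟩, where π : N → M ⊆ ℝⁿ is a Lipschitz map with π(x) = x for x ∈ M, and η : M → ℝⁿ is Lipschitz with ‖η(p)‖ = r. Assume x − π(x) is collinear with η(π(x)) for all x ∈ N, that η is a normal field on M (⟨η(p), q − p⟩ = o(‖q − p‖) as q → p in M), and that ⟨η(p), η(q) − η(p)⟩ = o(‖q − p‖). Then f is differentiable at every x ∈ N with Df_x(v) = ⟨v, η(π(x))⟩, and Df is Lipschitz, so f is of class C^{1+Lip}. -/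

import Mathlib

open Asymptotics

theorem stmt18 (n : ℕ) (r : ℝ) (hr : 0 < r)
    (N M : Set (EuclideanSpace ℝ (Fin n))) (hN : IsOpen N)
    (π η : EuclideanSpace ℝ (Fin n) → EuclideanSpace ℝ (Fin n))
    (hπlip : ∃ C : NNReal, LipschitzOnWith C π N)
    (hπid : ∀ x ∈ M, π x = x)
    (hπmaps : Set.MapsTo π N M)
    (hηlip : ∃ C : NNReal, LipschitzOnWith C η M)
    (hηnorm : ∀ p ∈ M, ‖η p‖ = r)
    (hcol : ∀ x ∈ N, ∃ t : ℝ, x - π x = t • η (π x))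
    (hnormal : ∀ p ∈ M,
      (fun q => (inner ℝ (η p) (q - p) : ℝ)) =o[nhdsWithin p M] fun q => ‖q - p‖)
    (hηnormal : ∀ p ∈ M,
      (fun q => (inner ℝ (η p) (η q - η p) : ℝ)) =o[nhdsWithin p M] fun q => ‖q - p‖)
    (f : EuclideanSpace ℝ (Fin n) → ℝ)
    (hf : f = fun x => (inner ℝ (x - π x) (η (π x)) : ℝ)) :
    (∀ x ∈ N, HasFDerivAt f ((innerSL ℝ) (η (π x))) x) ∧
    ∃ C : NNReal, LipschitzOnWith C
      (fun x => ((innerSL ℝ) (η (π x)) : EuclideanSpace ℝ (Fin n) →L[ℝ] ℝ)) N := by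
  obtain ⟨Cπ, hπl⟩ := hπlip
  obtain ⟨Cη, hηl⟩ := hηlip
  constructor
  · intro x hx
    have hpM : π x ∈ M := hπmaps hx
    have hNx : N ∈ nhds x := hN.mem_nhds hx
    -- tendsto of π to 𝓝[M] (π x)
    have hπt : Filter.Tendsto π (nhds x) (nhdsWithin (π x) M) := by
      rw [tendsto_nhdsWithin_iff]
      constructor
      · exact ((hπl.continuousOn x hx).continuousAt hNx).tendsto
      · exact Filter.eventually_of_mem hNx fun y hy => hπmaps hy
    have hπO : (fun y => ‖π y - π x‖) =O[nhds x] fun y => y - x := by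
      rw [Asymptotics.isBigO_iff]
      refine ⟨Cπ, Filter.eventually_of_mem hNx fun y hy => ?_⟩
      have h := hπl.dist_le_mul y hy x hx
      simpa [dist_eq_norm] using h
    have o₁ : (fun y => (inner ℝ (η (π x)) (π y - π x) : ℝ)) =o[nhds x] fun y => y - x :=
      ((hnormal (π x) hpM).comp_tendsto hπt).trans_isBigO hπO
    have o₂ : (fun y => (inner ℝ (η (π x)) (η (π y) - η (π x)) : ℝ)) =o[nhds x]
        fun y => y - x :=
      ((hηnormal (π x) hpM).comp_tendsto hπt).trans_isBigO hπO
    have hηO : (fun y => ‖η (π y) - η (π x)‖) =O[nhds x] fun y => ‖y - x‖ := by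
      rw [Asymptotics.isBigO_iff]
      refine ⟨Cη * Cπ, Filter.eventually_of_mem hNx fun y hy => ?_⟩
      have h1 := hηl.dist_le_mul (π y) (hπmaps hy) (π x) hpM
      have h2 := hπl.dist_le_mul y hy x hx
      have : dist (η (π y)) (η (π x)) ≤ (Cη : ℝ) * (Cπ * dist y x) :=
        h1.trans (by exact mul_le_mul_of_nonneg_left h2 Cη.coe_nonneg)
      simpa [dist_eq_norm, mul_assoc] using this
    have o₃ : (fun y => ‖η (π y) - η (π x)‖ ^ 2) =o[nhds x] fun y => y - x := by
      rw [← Asymptotics.isLittleO_norm_right]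
      have hsq : (fun y => ‖η (π y) - η (π x)‖ ^ 2) =O[nhds x]
          fun y => ‖y - x‖ * ‖y - x‖ := by
        simpa [pow_two] using hηO.mul hηO
      have h0 : (fun y : EuclideanSpace ℝ (Fin n) => ‖y - x‖) =o[nhds x]
          fun _ => (1 : ℝ) :=
        (Asymptotics.isLittleO_one_iff ℝ).2 (tendsto_norm_sub_self x)
      have hsm : (fun y : EuclideanSpace ℝ (Fin n) => ‖y - x‖ * ‖y - x‖) =o[nhds x]
          fun y => ‖y - x‖ := by
        simpa using h0.mul_isBigO (Asymptotics.isBigO_refl (fun y => ‖y - x‖) (nhds x))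
      exact hsq.trans_isLittleO hsm
    -- the A term
    obtain ⟨ε, hε, hball⟩ := Metric.isOpen_iff.mp hN x hx
    set K : ℝ := (‖x - π x‖ + ε + Cπ * ε) / r with hK
    have hg : (fun y => |(inner ℝ (η (π x)) (η (π y) - η (π x)) : ℝ)| +
        ‖η (π y) - η (π x)‖ ^ 2) =o[nhds x] fun y => y - x := by
      refine Asymptotics.IsLittleO.add ?_ o₃
      have := o₂.norm_left
      simpa [Real.norm_eq_abs] using this
    have hAO : (fun y => (inner ℝ (y - π y) (η (π y) - η (π x)) : ℝ)) =O[nhds x]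
        fun y => |(inner ℝ (η (π x)) (η (π y) - η (π x)) : ℝ)| +
          ‖η (π y) - η (π x)‖ ^ 2 := by
      rw [Asymptotics.isBigO_iff]
      refine ⟨K, Filter.eventually_of_mem (Metric.ball_mem_nhds x hε) fun y hy => ?_⟩
      have hyN : y ∈ N := hball hy
      obtain ⟨t, ht⟩ := hcol y hyN
      have hqM : π y ∈ M := hπmaps hyN
      have hnq : ‖η (π y)‖ = r := hηnorm _ hqM
      have hyq : ‖y - π y‖ = |t| * r := by
        rw [ht, norm_smul, hnq, Real.norm_eq_abs]
      have hdist : dist y x < ε := Metric.mem_ball.mp hy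
      have hbound : ‖y - π y‖ ≤ ‖x - π x‖ + ε + Cπ * ε := by
        have h1 : ‖y - π y‖ ≤ ‖y - x‖ + ‖x - π x‖ + ‖π x - π y‖ := by
          have : y - π y = (y - x) + (x - π x) + (π x - π y) := by abel
          rw [this]
          exact (norm_add_le _ _).trans (add_le_add_left (norm_add_le _ _) _)
        have h2 : ‖y - x‖ ≤ ε := by
          rw [← dist_eq_norm]; exact hdist.le
        have h3 : ‖π x - π y‖ ≤ Cπ * ε := by
          rw [← dist_eq_norm]
          exact (hπl.dist_le_mul x hx y hyN).trans
            (mul_le_mul_of_nonneg_left (by rw [dist_comm]; exact hdist.le) Cπ.coe_nonneg)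
        calc ‖y - π y‖ ≤ ‖y - x‖ + ‖x - π x‖ + ‖π x - π y‖ := h1
          _ ≤ ε + ‖x - π x‖ + Cπ * ε := by gcongr
          _ = ‖x - π x‖ + ε + Cπ * ε := by ring
      have htK : |t| ≤ K := by
        rw [hK, le_div_iff₀ hr]
        calc |t| * r = ‖y - π y‖ := hyq.symm
          _ ≤ _ := hbound
      have hinner : (inner ℝ (η (π y)) (η (π y) - η (π x)) : ℝ) =
          (inner ℝ (η (π x)) (η (π y) - η (π x)) : ℝ) + ‖η (π y) - η (π x)‖ ^ 2 := by
        rw [← real_inner_self_eq_norm_sq]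
        simp only [inner_sub_left, inner_sub_right]
        rw [real_inner_comm (η (π x)) (η (π y))]
        ring
      have hAt : (inner ℝ (y - π y) (η (π y) - η (π x)) : ℝ) =
          t * ((inner ℝ (η (π x)) (η (π y) - η (π x)) : ℝ) + ‖η (π y) - η (π x)‖ ^ 2) := by
        rw [ht, real_inner_smul_left, hinner]
      rw [hAt]
      have hgy : (0 : ℝ) ≤ |(inner ℝ (η (π x)) (η (π y) - η (π x)) : ℝ)| +
          ‖η (π y) - η (π x)‖ ^ 2 := by positivity
      rw [Real.norm_eq_abs, Real.norm_eq_abs, abs_mul, abs_of_nonneg hgy]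
      have habs : |(inner ℝ (η (π x)) (η (π y) - η (π x)) : ℝ) + ‖η (π y) - η (π x)‖ ^ 2|
          ≤ |(inner ℝ (η (π x)) (η (π y) - η (π x)) : ℝ)| + ‖η (π y) - η (π x)‖ ^ 2 := by
        refine (abs_add_le _ _).trans ?_
        gcongr
        exact le_of_eq (abs_of_nonneg (by positivity))
      have hKnn : 0 ≤ K := by
        rw [hK]
        positivity
      exact mul_le_mul htK habs (abs_nonneg _) hKnn
    have hA := hAO.trans_isLittleO hg
    refine HasFDerivAt.of_isLittleO ?_
    refine (hA.sub o₁).congr' ?_ Filter.EventuallyEq.rfl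
    refine Filter.eventually_of_mem hNx fun y hy => ?_
    subst hf
    have hxx : π x ∈ M := hpM
    simp only [innerSL_apply_apply]
    simp only [inner_sub_left, inner_sub_right]
    rw [real_inner_comm (η (π x)) y, real_inner_comm (η (π x)) x,
      real_inner_comm (η (π x)) (π y), real_inner_comm (η (π x)) (π x)]
    ring
  · refine ⟨‖(innerSL ℝ : EuclideanSpace ℝ (Fin n) →L[ℝ]
      EuclideanSpace ℝ (Fin n) →L[ℝ] ℝ)‖₊ * (Cη * Cπ), ?_⟩
    exact (innerSL ℝ).lipschitz.comp_lipschitzOnWith (hηl.comp hπl hπmaps)
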